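/- Let f : ℤ_p → ℤ_p be 1-Lipschitz with van der Put coefficients B_m. Then for all n ≥ 2, Σ_{m=p^{n−1}}^{p^n−1} B_m = Σ_{m=0}^{p^n−1} f(m) − p·Σ_{m=0}^{p^{n−1}−1} f(m). -/

import Mathlib

open MeasureTheory Finset

namespace VDP

noncomputable instance (p : ℕ) [Fact p.Prime] : MeasurableSpace ℤ_[p] := borel _
instance (p : ℕ) [Fact p.Prime] : BorelSpace ℤ_[p] := ⟨rfl⟩

/-- The Haar probability measure on `ℤ_[p]`. -/
noncomputable def haarZp (p : ℕ) [Fact p.Prime] : Measure ℤ_[p] :=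
  Measure.addHaarMeasure ⊤

/-- `f` is 1-Lipschitz. -/
def IsLip (p : ℕ) [Fact p.Prime] (f : ℤ_[p] → ℤ_[p]) : Prop :=
  ∀ x y : ℤ_[p], ‖f x - f y‖ ≤ ‖x - y‖

/-- The van der Put basis function `χ(m, x)` on `ℤ_[p]` (with `⌊log_p 0⌋ = 0`). -/
noncomputable def chi (p : ℕ) [Fact p.Prime] (m : ℕ) (x : ℤ_[p]) : ℤ_[p] :=
  if ‖x - (m : ℤ_[p])‖ ≤ ((p : ℝ) ^ (Nat.log p m + 1))⁻¹ then 1 else 0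

/-- `q(m) = m_s p^s`, the leading term of the `p`-adic expansion of `m`. -/
def q (p m : ℕ) : ℕ := m / p ^ Nat.log p m * p ^ Nat.log p m

/-- `f` has van der Put expansion with coefficients `B`. -/
def vdpExpansion (p : ℕ) [Fact p.Prime] (f : ℤ_[p] → ℤ_[p]) (B : ℕ → ℤ_[p]) : Prop :=
  ∀ x, f x = ∑' m, B m * chi p m x

/-- `f` is bijective modulo `p^n`. -/
def BijModPow (p : ℕ) [Fact p.Prime] (f : ℤ_[p] → ℤ_[p]) (n : ℕ) : Prop :=
  Function.Bijective fun a : ZMod (p ^ n) => PadicInt.toZModPow n (f ((a.val : ℕ) : ℤ_[p]))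

/-- `f` is transitive modulo `p^n`. -/
def TransModPow (p : ℕ) [Fact p.Prime] (f : ℤ_[p] → ℤ_[p]) (n : ℕ) : Prop :=
  ∀ x : ℤ_[p], ∀ a : ZMod (p ^ n), ∃ k : ℕ, PadicInt.toZModPow n (f^[k] x) = a

/-- The `i`-th digit of the canonical `p`-adic expansion of `x`. -/
noncomputable def digit (p : ℕ) [Fact p.Prime] (x : ℤ_[p]) (i : ℕ) : ℕ :=
  x.appr (i + 1) / p ^ i % p

end VDP

namespace VDPaux
open VDP Finset
variable {p : ℕ} [Fact p.Prime]

lemma chi_nat_eq (k m : ℕ) :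
    chi p k (m : ℤ_[p]) =
      if ((p : ℤ) ^ (Nat.log p k + 1)) ∣ ((m : ℤ) - k) then 1 else 0 := by
  unfold chi
  congr 1
  have h1 : ((m : ℤ_[p]) - (k : ℤ_[p])) = (((m : ℤ) - (k : ℤ) : ℤ) : ℤ_[p]) := by
    push_cast; ring
  rw [h1]
  have h2 : ((p : ℝ) ^ (Nat.log p k + 1))⁻¹ = (p : ℝ) ^ (-(Nat.log p k + 1 : ℕ) : ℤ) := by
    rw [zpow_neg, zpow_natCast]
  rw [h2, PadicInt.norm_int_le_pow_iff_dvd]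

lemma count_mod (d a r : ℕ) (hd : 0 < d) (hr : r < d) :
    #({m ∈ range (d * a) | m % d = r}) = a := by
  have key : #({m ∈ range (d * a) | m % d = r}) = #(range a) := by
    apply Finset.card_bij' (i := fun m _ => m / d) (j := fun j _ => j * d + r)
    · intro m hm
      simp only [mem_filter, mem_range] at hm
      simp only [mem_range]
      exact Nat.div_lt_of_lt_mul hm.1
    · intro j hj
      simp only [mem_range] at hj
      simp only [mem_filter, mem_range]
      refine ⟨?_, ?_⟩
      · calc j * d + r < (j + 1) * d := by ring_nf; omega
          _ ≤ a * d := Nat.mul_le_mul_right d (by omega)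
          _ = d * a := Nat.mul_comm a d
      · rw [add_comm, Nat.add_mul_mod_self_right, Nat.mod_eq_of_lt hr]
    · intro m hm
      simp only [mem_filter, mem_range] at hm
      have := Nat.div_add_mod m d
      rw [Nat.mul_comm]
      omega
    · intro j hj
      rw [add_comm, Nat.add_mul_div_right _ _ hd, Nat.div_eq_of_lt hr]
      omega
  rw [key, Finset.card_range]

lemma chi_sum (n k : ℕ) (hk : k < p ^ n) (hn : 1 ≤ n) :
    ∑ m ∈ range (p ^ n), chi p k (m : ℤ_[p]) =
      ((p ^ (n - (Nat.log p k + 1)) : ℕ) : ℤ_[p]) := by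
  have hp : 1 < p := (Fact.out : p.Prime).one_lt
  set s := Nat.log p k with hs
  have hs1 : s + 1 ≤ n := by
    rcases Nat.eq_zero_or_pos k with h | h
    · simp [hs, h]; omega
    · have := Nat.log_lt_of_lt_pow (by omega : k ≠ 0) hk
      omega
  have hdvd : ∀ m : ℕ, (((p : ℤ) ^ (s + 1)) ∣ ((m : ℤ) - k)) ↔ m % p ^ (s + 1) = k % p ^ (s + 1) := by
    intro m
    rw [show ((p:ℤ)^(s+1)) = ((p^(s+1):ℕ):ℤ) by push_cast; ring, ← Nat.modEq_iff_dvd]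
    exact ⟨fun h => h.symm, fun h => h.symm⟩
  calc ∑ m ∈ range (p ^ n), chi p k (m : ℤ_[p])
      = ∑ m ∈ range (p ^ n), if m % p ^ (s + 1) = k % p ^ (s + 1) then (1 : ℤ_[p]) else 0 := by
        refine Finset.sum_congr rfl fun m _ => ?_
        rw [chi_nat_eq, ← hs]
        simp [hdvd m]
    _ = ((#({m ∈ range (p ^ n) | m % p ^ (s + 1) = k % p ^ (s + 1)}) : ℕ) : ℤ_[p]) := by
        rw [Finset.sum_boole]
    _ = ((p ^ (n - (s + 1)) : ℕ) : ℤ_[p]) := by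
        congr 1
        have hrange : p ^ n = p ^ (s + 1) * p ^ (n - (s + 1)) := by
          rw [← pow_add]
          congr 1
          omega
        rw [hrange]
        exact count_mod _ _ _ (pow_pos (by omega) _)
          (Nat.mod_lt _ (pow_pos (by omega) _))

lemma chi_zero (n k m : ℕ) (hm : m < p ^ n) (hk : p ^ n ≤ k) :
    chi p k (m : ℤ_[p]) = 0 := by
  have hp : 1 < p := (Fact.out : p.Prime).one_lt
  rw [chi_nat_eq, if_neg]
  intro hdvd
  set s := Nat.log p k with hs
  have hk0 : k ≠ 0 := by have : 0 < p ^ n := pow_pos (by omega) n; omega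
  have hns : n ≤ s := (Nat.le_log_iff_pow_le (by omega) hk0).mpr hk
  have hkp : k < p ^ (s + 1) := Nat.lt_pow_succ_log_self (by omega) k
  have hmp : m < p ^ (s + 1) := lt_of_lt_of_le hm (Nat.pow_le_pow_right (by omega) (by omega))
  have habs : |(m : ℤ) - k| < (p : ℤ) ^ (s + 1) := by
    have hcast : ((p : ℤ) ^ (s + 1)) = ((p ^ (s + 1) : ℕ) : ℤ) := by push_cast; ring
    rw [hcast, abs_lt]
    constructor <;> omega
  have := Int.eq_zero_of_abs_lt_dvd hdvd habs
  have : m = k := by omega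
  omega


lemma S_eq (f : ℤ_[p] → ℤ_[p]) (B : ℕ → ℤ_[p])
    (hB : ∀ x, f x = ∑' m, B m * chi p m x) (n : ℕ) (hn : 1 ≤ n) :
    ∑ m ∈ range (p ^ n), f (m : ℤ_[p]) =
      ∑ k ∈ range (p ^ n), B k * ((p ^ (n - (Nat.log p k + 1)) : ℕ) : ℤ_[p]) := by
  have step1 : ∀ m ∈ range (p ^ n),
      f (m : ℤ_[p]) = ∑ k ∈ range (p ^ n), B k * chi p k (m : ℤ_[p]) := by
    intro m hm
    rw [hB]
    refine tsum_eq_sum fun k hk => ?_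
    rw [chi_zero n k m (mem_range.mp hm) (not_lt.mp (by simpa using hk)), mul_zero]
  rw [Finset.sum_congr rfl step1, Finset.sum_comm]
  refine Finset.sum_congr rfl fun k hk => ?_
  rw [← Finset.mul_sum, chi_sum n k (mem_range.mp hk) hn]

theorem main (f : ℤ_[p] → ℤ_[p]) (B : ℕ → ℤ_[p])
    (hB : ∀ x, f x = ∑' m, B m * chi p m x) :
    ∀ n : ℕ, 2 ≤ n →
      ∑ m ∈ Finset.Ico (p ^ (n - 1)) (p ^ n), B m =
        (∑ m ∈ Finset.range (p ^ n), f (m : ℤ_[p])) -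
          (p : ℤ_[p]) * ∑ m ∈ Finset.range (p ^ (n - 1)), f (m : ℤ_[p]) := by
  intro n hn
  have hp : 1 < p := (Fact.out : p.Prime).one_lt
  rw [S_eq f B hB n (by omega), S_eq f B hB (n - 1) (by omega)]
  have hle : p ^ (n - 1) ≤ p ^ n := Nat.pow_le_pow_right (by omega) (by omega)
  have hsplit : ∑ k ∈ range (p ^ n), B k * ((p ^ (n - (Nat.log p k + 1)) : ℕ) : ℤ_[p])
      = (∑ k ∈ range (p ^ (n - 1)), B k * ((p ^ (n - (Nat.log p k + 1)) : ℕ) : ℤ_[p]))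
        + ∑ k ∈ Finset.Ico (p ^ (n - 1)) (p ^ n),
            B k * ((p ^ (n - (Nat.log p k + 1)) : ℕ) : ℤ_[p]) := by
    simp only [Finset.range_eq_Ico]
    exact (Finset.sum_Ico_consecutive _ (Nat.zero_le _) hle).symm
  rw [hsplit]
  have hIco : ∀ k ∈ Finset.Ico (p ^ (n - 1)) (p ^ n),
      B k * ((p ^ (n - (Nat.log p k + 1)) : ℕ) : ℤ_[p]) = B k := by
    intro k hk
    rw [Finset.mem_Ico] at hk
    have hlog : Nat.log p k = n - 1 := by
      apply Nat.log_eq_of_pow_le_of_lt_pow hk.1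
      rw [show n - 1 + 1 = n by omega]
      exact hk.2
    rw [hlog, show n - (n - 1 + 1) = 0 by omega]
    simp
  rw [Finset.sum_congr rfl hIco]
  have hlow : (p : ℤ_[p]) * ∑ k ∈ range (p ^ (n - 1)),
        B k * ((p ^ (n - 1 - (Nat.log p k + 1)) : ℕ) : ℤ_[p])
      = ∑ k ∈ range (p ^ (n - 1)), B k * ((p ^ (n - (Nat.log p k + 1)) : ℕ) : ℤ_[p]) := by
    rw [Finset.mul_sum]
    refine Finset.sum_congr rfl fun k hk => ?_
    rw [Finset.mem_range] at hk
    have hlog : Nat.log p k ≤ n - 2 := by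
      rcases Nat.eq_zero_or_pos k with h | h
      · simp only [h, Nat.log_zero_right]; omega
      · have := Nat.log_lt_of_lt_pow (by omega : k ≠ 0) hk
        omega
    have hexp : n - (Nat.log p k + 1) = (n - 1 - (Nat.log p k + 1)) + 1 := by omega
    rw [hexp, pow_succ]
    push_cast
    ring
  rw [hlow]
  ring

end VDPaux

open VDP Finset in
theorem stmt14 (p : ℕ) [Fact p.Prime] (f : ℤ_[p] → ℤ_[p]) (B : ℕ → ℤ_[p])
    (hf : IsLip p f) (hB : vdpExpansion p f B) :
    ∀ n : ℕ, 2 ≤ n →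
      ∑ m ∈ Finset.Ico (p ^ (n - 1)) (p ^ n), B m =
        (∑ m ∈ Finset.range (p ^ n), f (m : ℤ_[p])) -
          (p : ℤ_[p]) * ∑ m ∈ Finset.range (p ^ (n - 1)), f (m : ℤ_[p]) := by
  exact VDPaux.main f B hB
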